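/- Let 0 < B1 < B2 < 1, κ = (1−B1)/(1−B2), φ(z) = κz/((κ−1)z+1). Suppose 0 < s ≤ t ≤ φ(s) with s,t ∈ (0,1]. Define s0 = (κs − t)/((κ−1)t) and t0 = (κs − t)/((κ−1)s). Then 0 < s0 ≤ t0 ≤ 1, t0 = φ(s0), and s/s0 = t/t0 = (κ−1)st/(κs − t) ∈ (0,1]. -/

import Mathlib

theorem stmt_7 (B1 B2 κ : ℝ) (φ : ℝ → ℝ)
    (hB1 : 0 < B1) (hB12 : B1 < B2) (hB2 : B2 < 1)
    (hκ : κ = (1 - B1) / (1 - B2))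
    (hφ : ∀ z : ℝ, φ z = κ * z / ((κ - 1) * z + 1))
    (s t s0 t0 : ℝ) (hs : 0 < s) (hst : s ≤ t) (ht1 : t ≤ 1) (htφ : t ≤ φ s)
    (hs0 : s0 = (κ * s - t) / ((κ - 1) * t))
    (ht0 : t0 = (κ * s - t) / ((κ - 1) * s)) :
    0 < s0 ∧ s0 ≤ t0 ∧ t0 ≤ 1 ∧ t0 = φ s0 ∧
      s / s0 = (κ - 1) * s * t / (κ * s - t) ∧
      t / t0 = (κ - 1) * s * t / (κ * s - t) ∧
      0 < (κ - 1) * s * t / (κ * s - t) ∧ (κ - 1) * s * t / (κ * s - t) ≤ 1 := by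
  have hκ1 : 1 < κ := by
    rw [hκ, lt_div_iff₀ (by linarith)]; linarith
  have ht : 0 < t := lt_of_lt_of_le hs hst
  have hden : 0 < (κ - 1) * s + 1 := by nlinarith
  have key : (κ - 1) * s * t + t ≤ κ * s := by
    have h := htφ
    rw [hφ, le_div_iff₀ hden] at h
    nlinarith
  have hkt : 0 < (κ - 1) * t := by nlinarith
  have hks : 0 < (κ - 1) * s := by nlinarith
  have hd : 0 < κ * s - t := by nlinarith [mul_pos hks ht]
  have hκ0 : κ ≠ 0 := by positivity
  refine ⟨?_, ?_, ?_, ?_, ?_, ?_, ?_, ?_⟩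
  · rw [hs0]; exact div_pos hd hkt
  · rw [hs0, ht0]; gcongr <;> nlinarith
  · rw [ht0, div_le_one hks]; nlinarith
  · rw [ht0, hφ, hs0,
      show (κ - 1) * ((κ * s - t) / ((κ - 1) * t)) + 1 = κ * s / t by
        field_simp [sub_ne_zero.mpr hκ1.ne']; ring]
    rw [div_eq_div_iff hks.ne' (by positivity)]
    field_simp [sub_ne_zero.mpr hκ1.ne']
  · rw [hs0, div_div_eq_mul_div]; rw [div_eq_div_iff hd.ne' hd.ne']; ring
  · rw [ht0, div_div_eq_mul_div]; rw [div_eq_div_iff hd.ne' hd.ne']; ring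
  · exact div_pos (by nlinarith) hd
  · rw [div_le_one hd]; linarith
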